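/- arXiv:2308.08604 — 2 statements merged into one kernel-verified Lean document; each statement's English description precedes it below -/
import Mathlib

section
/- Let I ⊆ S = K[x_1,…,x_t] be an 𝔪-primary monomial ideal and for each i = 1,…,t let a_i ≥ 1 be such that x_i^{a_i} ∈ G(I). Then v(I) = (a_1 + a_2 + ⋯ + a_t) − t if and only if I = ⟨x_1^{a_1}, x_2^{a_2}, …, x_t^{a_t}⟩. -/
open MvPolynomial

noncomputable section

/-- The `v`-number of a graded ideal `I ⊆ K[x_1,…,x_t]`: the least `k ≥ 0` such that there is a
homogeneous polynomial `f` of degree `k` with `(I : f)` an associated prime of `S/I`. -/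
def vNumber {σ K : Type*} [Field K] (I : Ideal (MvPolynomial σ K)) : ℕ :=
  sInf {k : ℕ | ∃ f : MvPolynomial σ K, f.IsHomogeneous k ∧
    Submodule.colon I (Ideal.span {f}) ∈
      associatedPrimes (MvPolynomial σ K) (MvPolynomial σ K ⧸ I)}

/-- The edge ideal of a simple graph: generated by `x_i * x_j` for edges `{x_i, x_j}`. -/
def edgeIdeal (K : Type*) [Field K] {V : Type*} (G : SimpleGraph V) :
    Ideal (MvPolynomial V K) :=
  Ideal.span {m | ∃ i j, G.Adj i j ∧ m = X i * X j}

/-- `I` is a monomial ideal: generated by a set of monomials. -/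
def IsMonomialIdeal {σ K : Type*} [Field K] (I : Ideal (MvPolynomial σ K)) : Prop :=
  ∃ A : Set (σ →₀ ℕ), I = Ideal.span ((fun a => (monomial a (1 : K))) '' A)

/-- The graded maximal ideal `𝔪 = ⟨x_1,…,x_t⟩`. -/
def maxIdeal (K : Type*) [Field K] (σ : Type*) : Ideal (MvPolynomial σ K) :=
  Ideal.span (Set.range (X : σ → MvPolynomial σ K))

/-- `α(I)`: the minimum degree of a nonzero element of `I`. -/
def alphaNumber {σ K : Type*} [Field K] (I : Ideal (MvPolynomial σ K)) : ℕ :=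
  sInf {d : ℕ | ∃ f ∈ I, f ≠ 0 ∧ f.totalDegree = d}

/-- Exponent vectors of the minimal monomial generators of a monomial ideal `I`:
monomials in `I` none of whose proper divisors lies in `I`. -/
def minimalGenerators {σ K : Type*} [Field K] (I : Ideal (MvPolynomial σ K)) :
    Set (σ →₀ ℕ) :=
  {a | (monomial a (1 : K)) ∈ I ∧
    ∀ b : σ →₀ ℕ, b ≤ a → b ≠ a → (monomial b (1 : K)) ∉ I}

/-! ### Auxiliary lemmas -/

section Aux

variable {K : Type*} [Field K] {σ : Type*}

lemma mem_maxIdeal_iff (g : MvPolynomial σ K) :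
    g ∈ maxIdeal K σ ↔ coeff 0 g = 0 := by
  have hr : Set.range (X : σ → MvPolynomial σ K)
      = (fun s => monomial s (1 : K)) '' (Set.range fun i : σ => Finsupp.single i 1) := by
    rw [← Set.range_comp]
    rfl
  rw [maxIdeal, hr, mem_ideal_span_monomial_image]
  constructor
  · intro h
    by_contra h0
    obtain ⟨s, ⟨i, rfl⟩, hle⟩ := h 0 (mem_support_iff.mpr h0)
    have := Finsupp.single_le_iff.mp hle
    simp at this
  · intro h0 b hb
    have hbne : b ≠ 0 := by
      rintro rfl
      exact mem_support_iff.mp hb h0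
    obtain ⟨i, hi⟩ := Finsupp.ne_iff.mp hbne
    refine ⟨Finsupp.single i 1, ⟨i, rfl⟩, Finsupp.single_le_iff.mpr ?_⟩
    simpa using Nat.one_le_iff_ne_zero.mpr (by simpa using hi)

lemma maxIdeal_isPrime : (maxIdeal K σ).IsPrime := by
  have h : maxIdeal K σ = RingHom.ker (constantCoeff : MvPolynomial σ K →+* K) := by
    ext g
    rw [mem_maxIdeal_iff, RingHom.mem_ker, constantCoeff_eq]
  rw [h]
  exact RingHom.ker_isPrime _

lemma colon_eq_annihilator (I : Ideal (MvPolynomial σ K)) (f : MvPolynomial σ K) :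
    Submodule.colon I (Ideal.span {f}) =
      (Submodule.span (MvPolynomial σ K) {Ideal.Quotient.mk I f}).annihilator := by
  ext g
  rw [Submodule.mem_annihilator_span_singleton, Ideal.mem_colon_span_singleton]
  have h : g • (Ideal.Quotient.mk I f) = Ideal.Quotient.mk I (g * f) :=
    (Submodule.Quotient.mk_smul I g f).symm
  rw [h, Ideal.Quotient.eq_zero_iff_mem]

lemma monomial_mem_of_le {I : Ideal (MvPolynomial σ K)} {s b : σ →₀ ℕ}
    (hs : monomial s (1 : K) ∈ I) (h : s ≤ b) : monomial b (1 : K) ∈ I := by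
  have : monomial b (1 : K) = monomial s 1 * monomial (b - s) 1 := by
    rw [monomial_mul, one_mul, add_tsub_cancel_of_le h]
  rw [this]
  exact I.mul_mem_right _ hs

/-- If `c` is outside a monomial ideal `I` but all `x_i · x^c` are in `I`, then `(I : x^c) = 𝔪`. -/
lemma colon_monomial_eq_maxIdeal {I : Ideal (MvPolynomial σ K)}
    (hmonI : IsMonomialIdeal I) {c : σ →₀ ℕ}
    (hc : monomial c (1 : K) ∉ I) (hmul : ∀ i : σ, X i * monomial c (1 : K) ∈ I) :
    Submodule.colon I (Ideal.span {monomial c (1 : K)}) = maxIdeal K σ := by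
  obtain ⟨A, hA⟩ := hmonI
  apply le_antisymm
  · intro g hg
    rw [Ideal.mem_colon_span_singleton] at hg
    rw [mem_maxIdeal_iff]
    by_contra h0
    have hcsupp : c ∈ (g * monomial c (1 : K)).support := by
      rw [mem_support_iff]
      have h2 := coeff_mul_monomial 0 c (1 : K) g
      rw [zero_add, mul_one] at h2
      rw [h2]
      exact h0
    rw [hA] at hg
    obtain ⟨s, hsA, hsc⟩ := mem_ideal_span_monomial_image.mp hg c hcsupp
    have hsI : monomial s (1 : K) ∈ I := by
      rw [hA]
      exact Ideal.subset_span ⟨s, hsA, rfl⟩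
    exact hc (monomial_mem_of_le hsI hsc)
  · rw [maxIdeal, Ideal.span_le]
    rintro _ ⟨i, rfl⟩
    rw [SetLike.mem_coe, Ideal.mem_colon_span_singleton]
    exact hmul i

lemma colon_mem_associatedPrimes {I : Ideal (MvPolynomial σ K)}
    (hmonI : IsMonomialIdeal I) {c : σ →₀ ℕ}
    (hc : monomial c (1 : K) ∉ I) (hmul : ∀ i : σ, X i * monomial c (1 : K) ∈ I) :
    Submodule.colon I (Ideal.span {monomial c (1 : K)}) ∈
      associatedPrimes (MvPolynomial σ K) (MvPolynomial σ K ⧸ I) := by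
  rw [AssociatedPrimes.mem_iff]
  constructor
  · rw [colon_monomial_eq_maxIdeal hmonI hc hmul]
    exact maxIdeal_isPrime
  · refine ⟨Ideal.Quotient.mk I (monomial c (1 : K)), ?_⟩
    have key : Submodule.colon I (Ideal.span {monomial c (1 : K)}) =
        Submodule.colon ⊥ {Ideal.Quotient.mk I (monomial c (1 : K))} := by
      ext g
      rw [Submodule.mem_colon_singleton, Submodule.mem_bot, Ideal.mem_colon_span_singleton,
        show g • Ideal.Quotient.mk I (monomial c (1 : K)) = Ideal.Quotient.mk I (g * monomial c 1)
          from (Submodule.Quotient.mk_smul I g _).symm, Ideal.Quotient.eq_zero_iff_mem]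
    rw [← key, colon_monomial_eq_maxIdeal hmonI hc hmul, maxIdeal_isPrime.radical]

lemma degree_eq_sum_univ {t : ℕ} (b : Fin t →₀ ℕ) : b.degree = ∑ i, b i := by
  rw [Finsupp.degree]
  exact Finset.sum_subset (Finset.subset_univ _)
    (fun i _ hi => Finsupp.notMem_support_iff.mp hi)

end Aux

/-- v(I) = (∑ a_i) - t iff I is generated by the pure powers x_i^{a_i}. -/
theorem vNumber_eq_sum_pure_powers_iff {K : Type*} [Field K] (t : ℕ)
    (I : Ideal (MvPolynomial (Fin t) K))
    (hmon : IsMonomialIdeal I) (hprim : I.radical = maxIdeal K (Fin t))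
    (a : Fin t → ℕ) (ha : ∀ i, 1 ≤ a i)
    (hgen : ∀ i, Finsupp.single i (a i) ∈ minimalGenerators I) :
    vNumber I = (∑ i, a i) - t ↔
      I = Ideal.span (Set.range fun i => (X i : MvPolynomial (Fin t) K) ^ a i) := by
  classical
  set S := MvPolynomial (Fin t) K
  set J : Ideal S := Ideal.span (Set.range fun i => (X i : S) ^ a i) with hJdef
  -- the exponent vector `a - 1`
  set A1 : Fin t →₀ ℕ := Finsupp.equivFunOnFinite.symm (fun i => a i - 1) with hA1def
  have hA1app : ∀ i, A1 i = a i - 1 := fun i => rfl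
  -- arithmetic: ∑ (a i - 1) = ∑ a i - t
  have hsum : ∑ i, (a i - 1) = (∑ i, a i) - t := by
    have h1 : ∑ i, a i = ∑ i, ((a i - 1) + 1) := by
      apply Finset.sum_congr rfl
      intro i _
      have := ha i
      omega
    have h2 : ∑ i, ((a i - 1) + 1) = (∑ i, (a i - 1)) + t := by
      rw [Finset.sum_add_distrib, Finset.sum_const, Finset.card_univ, Fintype.card_fin,
        smul_eq_mul, mul_one]
    omega
  have hA1deg : A1.degree = (∑ i, a i) - t := by
    rw [degree_eq_sum_univ, ← hsum]
    exact Finset.sum_congr rfl fun i _ => hA1app i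
  -- membership criterion for J
  have hJmon : (Set.range fun i => (X i : S) ^ a i)
      = (fun s => monomial s (1 : K)) '' (Set.range fun i : Fin t => Finsupp.single i (a i)) := by
    rw [← Set.range_comp]
    apply congrArg
    funext i
    exact X_pow_eq_monomial
  have hmemJ : ∀ g : S, g ∈ J ↔ ∀ b ∈ g.support, ∃ i, Finsupp.single i (a i) ≤ b := by
    intro g
    rw [hJdef, hJmon, mem_ideal_span_monomial_image]
    constructor
    · intro h b hb
      obtain ⟨s, ⟨i, rfl⟩, hle⟩ := h b hb
      exact ⟨i, hle⟩
    · intro h b hb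
      obtain ⟨i, hle⟩ := h b hb
      exact ⟨Finsupp.single i (a i), ⟨i, rfl⟩, hle⟩
  -- 1 ∉ I
  have honeI : (1 : S) ∉ I := by
    intro h1
    have h2 : (1 : S) ∈ maxIdeal K (Fin t) := hprim ▸ Ideal.le_radical h1
    rw [mem_maxIdeal_iff, coeff_zero_one] at h2
    exact one_ne_zero h2
  constructor
  · -- forward direction, by contradiction
    intro hv
    by_contra hne
    -- J ≤ I
    have hJI : J ≤ I := by
      rw [hJdef, Ideal.span_le]
      rintro _ ⟨i, rfl⟩
      have h : ((X i : S) ^ a i) ∈ I := by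
        rw [X_pow_eq_monomial]
        exact (hgen i).1
      exact h
    have hJltI : J < I := lt_of_le_of_ne hJI (fun h => hne h.symm)
    obtain ⟨g, hgI, hgJ⟩ := SetLike.exists_of_lt hJltI
    -- find a monomial of I not in J
    obtain ⟨b, hbsupp, hbJ⟩ : ∃ b ∈ g.support, ∀ i, ¬ Finsupp.single i (a i) ≤ b := by
      by_contra h
      push_neg at h
      exact hgJ ((hmemJ g).mpr h)
    obtain ⟨A, hA⟩ := hmon
    have hbI : monomial b (1 : K) ∈ I := by
      rw [hA] at hgI ⊢
      obtain ⟨s, hsA, hsb⟩ := mem_ideal_span_monomial_image.mp hgI b hbsupp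
      exact monomial_mem_of_le (Ideal.subset_span ⟨s, hsA, rfl⟩) hsb
    have hbA1 : b ≤ A1 := by
      rw [Finsupp.le_def]
      intro i
      have h := hbJ i
      rw [Finsupp.single_le_iff] at h
      rw [hA1app]
      omega
    have hA1I : monomial A1 (1 : K) ∈ I := monomial_mem_of_le hbI hbA1
    -- choose a maximal monomial outside I below A1
    set P : ℕ → Prop := fun n => ∃ c : Fin t →₀ ℕ, c ≤ A1 ∧ c.degree = n ∧
      monomial c (1 : K) ∉ I with hPdef
    have hP0 : P 0 := ⟨0, bot_le, map_zero _, by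
      rw [monomial_zero']
      simpa using honeI⟩
    set d := Nat.findGreatest P A1.degree with hd
    obtain ⟨c, hcA1, hcdeg, hcI⟩ : P d :=
      Nat.findGreatest_spec (Nat.zero_le _) hP0
    -- every variable pushes x^c into I
    have hmul : ∀ i : Fin t, X i * monomial c (1 : K) ∈ I := by
      intro i
      have hXc : X i * monomial c (1 : K) = monomial (Finsupp.single i 1 + c) (1 : K) := by
        rw [← pow_one (X i : S), X_pow_eq_monomial, monomial_mul, one_mul]
      rw [hXc]
      by_cases hci : c i + 1 ≤ a i - 1
      · -- increment stays below A1; by maximality it is in I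
        by_contra hnotI
        have hle : Finsupp.single i 1 + c ≤ A1 := by
          rw [Finsupp.le_def]
          intro j
          rcases eq_or_ne j i with rfl | hji
          · simp only [Finsupp.add_apply, Finsupp.single_eq_same, hA1app]
            omega
          · simpa [Finsupp.add_apply, Finsupp.single_eq_of_ne' (Ne.symm hji)] using
              Finsupp.le_def.mp hcA1 j
        have hdeg' : (Finsupp.single i 1 + c).degree = d + 1 := by
          rw [degree_eq_sum_univ]
          simp only [Finsupp.add_apply]
          rw [Finset.sum_add_distrib]
          have hs1 : ∑ j, (Finsupp.single i 1 : Fin t →₀ ℕ) j = 1 := by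
            simp [Finsupp.single_apply]
          rw [hs1, ← degree_eq_sum_univ, hcdeg, add_comm]
        have hdle : d + 1 ≤ A1.degree := by
          rw [← hdeg', degree_eq_sum_univ, degree_eq_sum_univ]
          exact Finset.sum_le_sum fun j _ => Finsupp.le_def.mp hle j
        have hng := Nat.findGreatest_is_greatest (lt_add_one d) hdle
        exact hng ⟨Finsupp.single i 1 + c, hle, hdeg', hnotI⟩
      · -- c i = a i - 1, so x_i^{a i} divides the increment
        have hle : Finsupp.single i (a i) ≤ Finsupp.single i 1 + c := by
          rw [Finsupp.single_le_iff]
          have h1 := Finsupp.le_def.mp hcA1 i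
          rw [hA1app] at h1
          have := ha i
          simp only [Finsupp.add_apply, Finsupp.single_eq_same]
          omega
        exact monomial_mem_of_le (hgen i).1 hle
    -- hence d ∈ the v-number set
    have hdmem : d ∈ {k : ℕ | ∃ f : S, f.IsHomogeneous k ∧
        Submodule.colon I (Ideal.span {f}) ∈ associatedPrimes S (S ⧸ I)} :=
      ⟨monomial c (1 : K), isHomogeneous_monomial _ hcdeg,
        colon_mem_associatedPrimes ⟨A, hA⟩ hcI hmul⟩
    have hvle : vNumber I ≤ d := Nat.sInf_le hdmem
    -- but d < ∑ a i - t
    have hcneA1 : c ≠ A1 := fun h => hcI (h ▸ hA1I)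
    have hdlt : d < (∑ i, a i) - t := by
      rw [← hA1deg, ← hcdeg, degree_eq_sum_univ, degree_eq_sum_univ]
      obtain ⟨i, hi⟩ := Finsupp.ne_iff.mp hcneA1
      exact Finset.sum_lt_sum (fun j _ => Finsupp.le_def.mp hcA1 j)
        ⟨i, Finset.mem_univ i, lt_of_le_of_ne (Finsupp.le_def.mp hcA1 i) hi⟩
    omega
  · -- backward direction
    intro hIJ
    subst hIJ
    -- the witness monomial x^{a-1}
    have hA1notJ : monomial A1 (1 : K) ∉ J := by
      rw [hmemJ]
      push_neg
      refine ⟨A1, ?_, ?_⟩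
      · rw [mem_support_iff, coeff_monomial, if_pos rfl]
        exact one_ne_zero
      · intro i hle
        rw [Finsupp.single_le_iff, hA1app] at hle
        have := ha i
        omega
    have hmul : ∀ i : Fin t, X i * monomial A1 (1 : K) ∈ J := by
      intro i
      have hXc : X i * monomial A1 (1 : K) = monomial (Finsupp.single i 1 + A1) (1 : K) := by
        rw [← pow_one (X i : S), X_pow_eq_monomial, monomial_mul, one_mul]
      rw [hXc, hmemJ]
      intro b hb
      have hbeq : b = Finsupp.single i 1 + A1 := by
        by_contra h
        rw [mem_support_iff, coeff_monomial, if_neg (fun h' => h h'.symm)] at hb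
        exact hb rfl
      subst hbeq
      refine ⟨i, Finsupp.single_le_iff.mpr ?_⟩
      simp only [Finsupp.add_apply, Finsupp.single_eq_same, hA1app]
      have := ha i
      omega
    have hmem : ((∑ i, a i) - t) ∈ {k : ℕ | ∃ f : S, f.IsHomogeneous k ∧
        Submodule.colon J (Ideal.span {f}) ∈ associatedPrimes S (S ⧸ J)} :=
      ⟨monomial A1 (1 : K), isHomogeneous_monomial _ hA1deg,
        colon_mem_associatedPrimes hmon hA1notJ hmul⟩
    -- any element of the set equals ∑ a i - t
    have hforall : ∀ k ∈ {k : ℕ | ∃ f : S, f.IsHomogeneous k ∧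
        Submodule.colon J (Ideal.span {f}) ∈ associatedPrimes S (S ⧸ J)},
        k = (∑ i, a i) - t := by
      rintro k ⟨f, hfhom, hass⟩
      have hP := hass.isPrime
      set Q := Submodule.colon J (Ideal.span {f}) with hQ
      have hfJ : f ∉ J := by
        intro hf
        apply hP.ne_top
        rw [Ideal.eq_top_iff_one, hQ, Ideal.mem_colon_span_singleton, one_mul]
        exact hf
      have hJQ : J ≤ Q := by
        intro g hg
        rw [hQ, Ideal.mem_colon_span_singleton]
        exact J.mul_mem_right f hg
      have hmQ : maxIdeal K (Fin t) ≤ Q := by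
        rw [← hprim, ← hP.radical]
        exact Ideal.radical_mono hJQ
      have hXf : ∀ i : Fin t, X i * f ∈ J := by
        intro i
        have hXQ : (X i : S) ∈ Q := hmQ (by
          rw [maxIdeal]
          exact Ideal.subset_span ⟨i, rfl⟩)
        rwa [hQ, Ideal.mem_colon_span_singleton] at hXQ
      obtain ⟨b, hbsupp, hbJ⟩ : ∃ b ∈ f.support, ∀ i, ¬ Finsupp.single i (a i) ≤ b := by
        by_contra h
        push_neg at h
        exact hfJ ((hmemJ f).mpr h)
      have hbi : ∀ i, b i = a i - 1 := by
        intro i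
        have hsupp' : Finsupp.single i 1 + b ∈ (X i * f).support := by
          rw [mem_support_iff, coeff_X_mul]
          exact mem_support_iff.mp hbsupp
        obtain ⟨j, hj⟩ := (hmemJ _).mp (hXf i) _ hsupp'
        rw [Finsupp.single_le_iff, Finsupp.add_apply] at hj
        have hji : j = i := by
          by_contra hne
          have h2 := hbJ j
          rw [Finsupp.single_le_iff] at h2
          rw [Finsupp.single_eq_of_ne' (fun h => hne h.symm)] at hj
          omega
        subst hji
        have h2 := hbJ j
        rw [Finsupp.single_le_iff] at h2
        rw [Finsupp.single_eq_same] at hj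
        omega
      have hbA1 : b = A1 := Finsupp.ext fun i => by rw [hbi i, hA1app]
      have hdeg : Finsupp.degree b = k := by
        have h := hfhom (mem_support_iff.mp hbsupp)
        rw [Finsupp.degree_eq_weight_one]
        exact h
      rw [← hdeg, hbA1, hA1deg]
    exact le_antisymm (Nat.sInf_le hmem)
      (le_csInf ⟨_, hmem⟩ fun k hk => (hforall k hk).ge)

end
end

section
/- Let I = ⟨x_1^{a_1}, x_2^{a_2}, …, x_t^{a_t}⟩ ⊆ S = K[x_1,…,x_t] with all a_i ≥ 1. Then v(I^{n+1}) = v(I) + n·α(I) for all n ≥ 1 (here α(I) = min_i a_i). -/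
open MvPolynomial

noncomputable section

namespace VAux

variable {K : Type*} [Field K] {t : ℕ}

/-- The sum of the floors `⌊c_j / a_j⌋`. -/
def fsum (a : Fin t → ℕ) (c : Fin t →₀ ℕ) : ℕ := ∑ j, c j / a j

lemma fsum_mono (a : Fin t → ℕ) {c d : Fin t →₀ ℕ} (h : ∀ j, c j ≤ d j) :
    fsum a c ≤ fsum a d :=
  Finset.sum_le_sum fun j _ => Nat.div_le_div_right (h j)

lemma fsum_add_le (a : Fin t → ℕ) (c d : Fin t →₀ ℕ) :
    fsum a c + fsum a d ≤ fsum a (c + d) := by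
  rw [fsum, fsum, fsum, ← Finset.sum_add_distrib]
  exact Finset.sum_le_sum fun j _ => by
    simpa using Nat.add_div_le_add_div (c j) (d j) (a j)

/-- The "monomial valuation" ideal: polynomials all whose monomials `c` satisfy
`m ≤ ∑ ⌊c_j/a_j⌋`. -/
def Jdeal (a : Fin t → ℕ) (m : ℕ) : Ideal (MvPolynomial (Fin t) K) where
  carrier := {f | ∀ c ∈ f.support, m ≤ fsum a c}
  add_mem' := by
    intro p q hp hq c hc
    rcases Finset.mem_union.mp (MvPolynomial.support_add hc) with h | h
    · exact hp c h
    · exact hq c h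
  zero_mem' := by simp
  smul_mem' := by
    intro g f hf c hc
    rw [smul_eq_mul] at hc
    obtain ⟨u, hu, v, hv, rfl⟩ := Finset.mem_add.mp (MvPolynomial.support_mul g f hc)
    exact le_trans (hf v hv) (fsum_mono a fun j => by simp)

lemma mem_Jdeal {a : Fin t → ℕ} {m : ℕ} {f : MvPolynomial (Fin t) K} :
    f ∈ Jdeal (K := K) a m ↔ ∀ c ∈ f.support, m ≤ fsum a c := Iff.rfl

/-- The pure power ideal `⟨x_1^{a_1},…,x_t^{a_t}⟩`. -/
def pideal (K : Type*) [Field K] {t : ℕ} (a : Fin t → ℕ) : Ideal (MvPolynomial (Fin t) K) :=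
  Ideal.span (Set.range fun j => (X j : MvPolynomial (Fin t) K) ^ a j)

lemma pideal_le_J (a : Fin t → ℕ) (ha : ∀ i, 1 ≤ a i) :
    pideal K a ≤ Jdeal (K := K) a 1 := by
  rw [pideal, Ideal.span_le]
  rintro _ ⟨j, rfl⟩
  rw [SetLike.mem_coe, mem_Jdeal]
  intro c hc
  rw [MvPolynomial.support_X_pow, Finset.mem_singleton] at hc
  subst hc
  rw [fsum]
  calc (1 : ℕ) = Finsupp.single j (a j) j / a j := by
        simp [Nat.div_self (ha j)]
    _ ≤ ∑ i, Finsupp.single j (a j) i / a i :=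
        Finset.single_le_sum (f := fun i => Finsupp.single j (a j) i / a i)
          (fun i _ => Nat.zero_le _) (Finset.mem_univ j)

lemma pow_le_J (a : Fin t → ℕ) (ha : ∀ i, 1 ≤ a i) (m : ℕ) :
    (pideal K a) ^ m ≤ Jdeal (K := K) a m := by
  induction m with
  | zero => intro f _; rw [mem_Jdeal]; intro c _; exact Nat.zero_le _
  | succ m ih =>
    rw [pow_succ]
    refine Ideal.mul_le.mpr fun r hr s hs => ?_
    rw [mem_Jdeal]
    intro c hc
    obtain ⟨u, hu, v, hv, rfl⟩ := Finset.mem_add.mp (MvPolynomial.support_mul r s hc)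
    calc m + 1 ≤ fsum a u + fsum a v := add_le_add (ih hr u hu) (pideal_le_J a ha hs v hv)
      _ ≤ fsum a (u + v) := fsum_add_le a u v

lemma prod_pow_mem (a : Fin t → ℕ) (b : Fin t → ℕ) (s : Finset (Fin t)) :
    (∏ j ∈ s, ((X j : MvPolynomial (Fin t) K) ^ a j) ^ b j) ∈ (pideal K a) ^ (∑ j ∈ s, b j) := by
  classical
  induction s using Finset.induction with
  | empty => simp [Ideal.one_eq_top]
  | @insert i s hi ih =>
    rw [Finset.prod_insert hi, Finset.sum_insert hi, pow_add]
    exact Ideal.mul_mem_mul (Ideal.pow_mem_pow (Ideal.subset_span (Set.mem_range_self i)) _) ih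

lemma monomial_mem_pow (a : Fin t → ℕ) (m : ℕ) (c : Fin t →₀ ℕ) (k : K)
    (h : m ≤ ∑ j, c j / a j) :
    monomial c k ∈ (pideal K a) ^ m := by
  have key : monomial c k = (C k * ∏ j, (X j : MvPolynomial (Fin t) K) ^ (c j % a j)) *
      ∏ j, ((X j : MvPolynomial (Fin t) K) ^ a j) ^ (c j / a j) := by
    rw [monomial_eq, Finsupp.prod_fintype _ _ (fun i => pow_zero _), mul_assoc,
      ← Finset.prod_mul_distrib]
    congr 1
    refine Finset.prod_congr rfl fun j _ => ?_
    rw [← pow_mul, ← pow_add]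
    congr 1
    exact (Nat.mod_add_div (c j) (a j)).symm
  rw [key]
  exact Ideal.mul_mem_left _ _
    (Ideal.pow_le_pow_right h (prod_pow_mem a (fun j => c j / a j) Finset.univ))

lemma mem_pow_of_support (a : Fin t → ℕ) (m : ℕ) (f : MvPolynomial (Fin t) K)
    (h : ∀ c ∈ f.support, m ≤ ∑ j, c j / a j) : f ∈ (pideal K a) ^ m := by
  have hsum : (∑ c ∈ f.support, monomial c (coeff c f)) ∈ (pideal K a) ^ m :=
    Submodule.sum_mem _ fun c hc => monomial_mem_pow a m c (coeff c f) (h c hc)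
  rwa [← f.as_sum] at hsum

section General
variable {σ : Type*}

lemma mem_maxIdeal_iff {g : MvPolynomial σ K} :
    g ∈ maxIdeal K σ ↔ constantCoeff g = 0 := by
  rw [maxIdeal, ← Set.image_univ, mem_ideal_span_X_image]
  constructor
  · intro h
    rw [constantCoeff_eq]
    by_contra h0
    obtain ⟨i, _, hi⟩ := h 0 (mem_support_iff.mpr h0)
    simp at hi
  · intro h0 c hc
    have hcne : c ≠ 0 := by
      rintro rfl
      exact mem_support_iff.mp hc (by rwa [constantCoeff_eq] at h0)
    obtain ⟨i, hi⟩ := Finsupp.ne_iff.mp hcne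
    exact ⟨i, Set.mem_univ i, by simpa using hi⟩

lemma maxIdeal_isPrime : (maxIdeal K σ).IsPrime := by
  constructor
  · intro h
    have h1 : (1 : MvPolynomial σ K) ∈ maxIdeal K σ := h ▸ Submodule.mem_top
    rw [mem_maxIdeal_iff, map_one] at h1
    exact one_ne_zero h1
  · intro p q hpq
    rw [mem_maxIdeal_iff, map_mul] at hpq
    rcases mul_eq_zero.mp hpq with h | h
    · exact Or.inl (mem_maxIdeal_iff.mpr h)
    · exact Or.inr (mem_maxIdeal_iff.mpr h)

lemma colon_eq_annihilator (I : Ideal (MvPolynomial σ K)) (f : MvPolynomial σ K) :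
    Submodule.colon I (Ideal.span {f}) =
      (Submodule.span (MvPolynomial σ K) {(Ideal.Quotient.mk I f)}).annihilator := by
  ext r
  rw [Ideal.mem_colon_span_singleton, Submodule.mem_annihilator_span_singleton]
  have hs : r • (Ideal.Quotient.mk I f) = Ideal.Quotient.mk I (r * f) := rfl
  rw [hs, Ideal.Quotient.eq_zero_iff_mem]

end General

/-- Main computation: `v((pideal a)^{m+1}) = ∑ (a_j - 1) + m · a_k` where `a_k` is minimal. -/
lemma vNumber_pow_succ (a : Fin t → ℕ) (ha : ∀ i, 1 ≤ a i) (k : Fin t) (hk : ∀ j, a k ≤ a j)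
    (m : ℕ) :
    vNumber ((pideal K a) ^ (m + 1)) = (∑ j, (a j - 1)) + m * a k := by
  classical
  set I := pideal K a with hI
  -- the witness exponent vector
  set d : Fin t →₀ ℕ := Finsupp.equivFunOnFinite.symm (fun j => a j - 1) with hd
  set c : Fin t →₀ ℕ := d + Finsupp.single k (m * a k) with hcdef
  have hdj : ∀ j, d j = a j - 1 := fun j => rfl
  have hcj : ∀ j, j ≠ k → c j = a j - 1 := by
    intro j hj
    rw [hcdef, Finsupp.add_apply, Finsupp.single_apply, if_neg (Ne.symm hj), add_zero, hdj]
  have hck : c k = a k - 1 + m * a k := by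
    rw [hcdef, Finsupp.add_apply, Finsupp.single_apply, if_pos rfl, hdj]
  have hdiv_ne : ∀ j, (a j - 1) / a j = 0 := fun j => Nat.div_eq_of_lt (by have := ha j; omega)
  have hdivk : c k / a k = m := by
    rw [hck, Nat.add_mul_div_right _ _ (ha k), hdiv_ne k, zero_add]
  have hfsum : (∑ j, c j / a j) = m := by
    rw [Finset.sum_eq_single_of_mem k (Finset.mem_univ k)]
    · exact hdivk
    · intro j _ hj
      rw [hcj j hj, hdiv_ne j]
  set f : MvPolynomial (Fin t) K := monomial c 1 with hf
  have hsupp : f.support = {c} := by rw [hf, support_monomial, if_neg one_ne_zero]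
  have hfnot : f ∉ I ^ (m + 1) := by
    intro hmem
    have := pow_le_J a ha (m + 1) hmem c (by rw [hsupp]; exact Finset.mem_singleton_self c)
    rw [fsum, hfsum] at this
    omega
  have hXf : ∀ i, (X i : MvPolynomial (Fin t) K) * f ∈ I ^ (m + 1) := by
    intro i
    have hXm : (X i : MvPolynomial (Fin t) K) * f = monomial ((Finsupp.single i 1 + c : Fin t →₀ ℕ)) 1 := by
      rw [hf, monomial_single_add, pow_one]
    rw [hXm]
    apply monomial_mem_pow a (m + 1) _ 1
    by_cases hik : i = k
    · subst hik
      have hval : ((Finsupp.single i 1 + c : Fin t →₀ ℕ)) i / a i = m + 1 := by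
        rw [Finsupp.add_apply, Finsupp.single_apply, if_pos rfl, hck]
        have e1 : 1 + (a i - 1 + m * a i) = (m + 1) * a i := by
          have h2 : 1 + (a i - 1) = a i := by have := ha i; omega
          calc 1 + (a i - 1 + m * a i) = (1 + (a i - 1)) + m * a i := by omega
            _ = a i + m * a i := by rw [h2]
            _ = (m + 1) * a i := by ring
        rw [e1, Nat.mul_div_cancel _ (ha i)]
      calc m + 1 = ((Finsupp.single i 1 + c : Fin t →₀ ℕ)) i / a i := hval.symm
        _ ≤ ∑ j, ((Finsupp.single i 1 + c : Fin t →₀ ℕ)) j / a j :=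
          Finset.single_le_sum (f := fun j => ((Finsupp.single i 1 + c : Fin t →₀ ℕ)) j / a j)
            (fun j _ => Nat.zero_le _) (Finset.mem_univ i)
    · have hvi : ((Finsupp.single i 1 + c : Fin t →₀ ℕ)) i / a i = 1 := by
        rw [Finsupp.add_apply, Finsupp.single_apply, if_pos rfl, hcj i hik]
        have e1 : 1 + (a i - 1) = a i := by have := ha i; omega
        rw [e1, Nat.div_self (ha i)]
      have hvk : ((Finsupp.single i 1 + c : Fin t →₀ ℕ)) k / a k = m := by
        rw [Finsupp.add_apply, Finsupp.single_apply, if_neg hik, zero_add, hdivk]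
      calc m + 1 = ∑ j ∈ ({i, k} : Finset (Fin t)), ((Finsupp.single i 1 + c : Fin t →₀ ℕ)) j / a j := by
            rw [Finset.sum_pair hik, hvi, hvk]; omega
        _ ≤ ∑ j, ((Finsupp.single i 1 + c : Fin t →₀ ℕ)) j / a j :=
          Finset.sum_le_sum_of_subset (Finset.subset_univ _)
  have hcolon : Submodule.colon (I ^ (m + 1)) (Ideal.span {f}) = maxIdeal K (Fin t) := by
    apply le_antisymm
    · intro g hg
      rw [Ideal.mem_colon_span_singleton] at hg
      rw [mem_maxIdeal_iff]
      by_contra h0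
      have hcmem : c ∈ (g * f).support := by
        rw [mem_support_iff, hf]
        have hco : coeff (0 + c) (g * monomial c (1 : K)) = coeff 0 g * 1 :=
          coeff_mul_monomial 0 c 1 g
        rw [zero_add, mul_one] at hco
        rw [hco]
        rwa [constantCoeff_eq] at h0
      have hge := pow_le_J a ha (m + 1) hg c hcmem
      rw [fsum, hfsum] at hge
      omega
    · rw [maxIdeal, Ideal.span_le]
      rintro _ ⟨i, rfl⟩
      rw [SetLike.mem_coe, Ideal.mem_colon_span_singleton]
      exact hXf i
  have hassoc : maxIdeal K (Fin t) ∈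
      associatedPrimes (MvPolynomial (Fin t) K) (MvPolynomial (Fin t) K ⧸ (I ^ (m + 1))) := by
    refine ⟨maxIdeal_isPrime, ⟨Ideal.Quotient.mk _ f, ?_⟩⟩
    rw [Submodule.bot_colon', ← colon_eq_annihilator, hcolon, maxIdeal_isPrime.radical]
  -- degree of the witness
  have hcsum : (∑ j, c j) = (∑ j, (a j - 1)) + m * a k := by
    have h1 : ∀ j : Fin t, c j = (a j - 1) + Finsupp.single k (m * a k) j := by
      intro j
      rw [hcdef, Finsupp.add_apply, hdj]
    rw [Finset.sum_congr rfl (fun j _ => h1 j), Finset.sum_add_distrib]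
    congr 1
    rw [Finset.sum_eq_single_of_mem k (Finset.mem_univ k)]
    · rw [Finsupp.single_apply, if_pos rfl]
    · intro j _ hj
      rw [Finsupp.single_apply, if_neg (Ne.symm hj)]
  have hcdeg : c.degree = (∑ j, (a j - 1)) + m * a k := by
    rw [← hcsum, Finsupp.degree_apply]
    exact Finset.sum_subset (Finset.subset_univ _)
      (fun j _ hj => Finsupp.notMem_support_iff.mp hj)
  have hhom : f.IsHomogeneous ((∑ j, (a j - 1)) + m * a k) :=
    isHomogeneous_monomial 1 hcdeg
  have hmem_set : ((∑ j, (a j - 1)) + m * a k) ∈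
      {N : ℕ | ∃ g : MvPolynomial (Fin t) K, g.IsHomogeneous N ∧
        Submodule.colon (I ^ (m + 1)) (Ideal.span {g}) ∈
          associatedPrimes (MvPolynomial (Fin t) K)
            (MvPolynomial (Fin t) K ⧸ (I ^ (m + 1)))} :=
    ⟨f, hhom, by rw [hcolon]; exact hassoc⟩
  -- lower bound
  have hlow : ∀ N ∈ {N : ℕ | ∃ g : MvPolynomial (Fin t) K, g.IsHomogeneous N ∧
      Submodule.colon (I ^ (m + 1)) (Ideal.span {g}) ∈
        associatedPrimes (MvPolynomial (Fin t) K)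
          (MvPolynomial (Fin t) K ⧸ (I ^ (m + 1)))},
      (∑ j, (a j - 1)) + m * a k ≤ N := by
    rintro N ⟨g, hghom, hgassoc⟩
    have hprime : (Submodule.colon (I ^ (m + 1)) (Ideal.span {g})).IsPrime := hgassoc.1
    have hcolon_le : ∀ r ∈ I ^ (m + 1),
        r ∈ Submodule.colon (I ^ (m + 1)) (Ideal.span {g}) := fun r hr =>
      Ideal.mem_colon_span_singleton.mpr (Ideal.mul_mem_right g _ hr)
    have hXg : ∀ i, (X i : MvPolynomial (Fin t) K) * g ∈ I ^ (m + 1) := by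
      intro i
      have hpow : ((X i : MvPolynomial (Fin t) K) ^ a i) ^ (m + 1) ∈ I ^ (m + 1) :=
        Ideal.pow_mem_pow (Ideal.subset_span (Set.mem_range_self i)) _
      have hXmem : (X i : MvPolynomial (Fin t) K) ∈
          Submodule.colon (I ^ (m + 1)) (Ideal.span {g}) := by
        apply hprime.mem_of_pow_mem (a i * (m + 1))
        rw [pow_mul]
        exact hcolon_le _ hpow
      exact Ideal.mem_colon_span_singleton.mp hXmem
    have hgnot : g ∉ I ^ (m + 1) := by
      intro hgmem
      apply hprime.ne_top
      rw [eq_top_iff]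
      intro r _
      exact Ideal.mem_colon_span_singleton.mpr (Ideal.mul_mem_left _ r hgmem)
    have hex : ∃ c0 ∈ g.support, (∑ j, c0 j / a j) < m + 1 := by
      by_contra hno
      push_neg at hno
      exact hgnot (mem_pow_of_support a (m + 1) g hno)
    obtain ⟨c0, hc0mem, hc0lt⟩ := hex
    have hsplit : ∀ i, (∑ j, ((Finsupp.single i 1 + c0 : Fin t →₀ ℕ)) j / a j)
        = (∑ j, c0 j / a j) + (if a i ∣ c0 i + 1 then 1 else 0) := by
      intro i
      have hterm : ∀ j : Fin t, ((Finsupp.single i 1 + c0 : Fin t →₀ ℕ)) j / a j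
          = c0 j / a j + (if j = i then (if a i ∣ c0 i + 1 then 1 else 0) else 0) := by
        intro j
        rcases eq_or_ne j i with rfl | hne
        · rw [Finsupp.add_apply, Finsupp.single_apply, if_pos rfl, if_pos rfl,
            add_comm 1 (c0 j), Nat.succ_div]
        · rw [Finsupp.add_apply, Finsupp.single_apply, if_neg (Ne.symm hne), zero_add,
            if_neg hne, add_zero]
      rw [Finset.sum_congr rfl (fun j _ => hterm j), Finset.sum_add_distrib]
      congr 1
      rw [Finset.sum_ite_eq' Finset.univ i (fun _ => if a i ∣ c0 i + 1 then 1 else 0),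
        if_pos (Finset.mem_univ i)]
    have hsupp' : ∀ i, Finsupp.single i 1 + c0 ∈ ((X i : MvPolynomial (Fin t) K) * g).support := by
      intro i
      rw [support_X_mul]
      exact Finset.mem_map.mpr ⟨c0, hc0mem, rfl⟩
    have hge : ∀ i, m + 1 ≤ ∑ j, ((Finsupp.single i 1 + c0 : Fin t →₀ ℕ)) j / a j := by
      intro i
      exact pow_le_J a ha (m + 1) (hXg i) _ (hsupp' i)
    have hdvd : ∀ i, a i ∣ c0 i + 1 := by
      intro i
      by_contra hnd
      have := hge i
      rw [hsplit i, if_neg hnd, add_zero] at this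
      omega
    have hfsum0 : (∑ j, c0 j / a j) = m := by
      have := hge k
      rw [hsplit k] at this
      split_ifs at this <;> omega
    have hmod : ∀ i, c0 i % a i = a i - 1 := by
      intro i
      have h2 := Nat.div_add_mod (c0 i) (a i)
      have h3 : a i ∣ a i * (c0 i / a i) + (c0 i % a i + 1) := by
        rw [← add_assoc, h2]; exact hdvd i
      have h4 : a i ∣ c0 i % a i + 1 := (Nat.dvd_add_right (Dvd.intro _ rfl)).mp h3
      have h5 : c0 i % a i < a i := Nat.mod_lt _ (ha i)
      have h6 : a i ≤ c0 i % a i + 1 := Nat.le_of_dvd (Nat.succ_pos _) h4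
      omega
    have hNdeg : N = ∑ j, c0 j := by
      have hw := hghom (mem_support_iff.mp hc0mem)
      rw [Pi.one_def, ← Finsupp.degree_eq_weight_one] at hw
      rw [← hw, Finsupp.degree_apply]
      exact Finset.sum_subset (Finset.subset_univ _)
        (fun j _ hj => Finsupp.notMem_support_iff.mp hj)
    have hsum_ge : (∑ j, (a j - 1)) + m * a k ≤ ∑ j, c0 j := by
      have h1 : ∀ j : Fin t, c0 j = a j * (c0 j / a j) + (a j - 1) := by
        intro j
        have := Nat.div_add_mod (c0 j) (a j)
        rw [hmod j] at this
        omega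
      calc (∑ j, (a j - 1)) + m * a k
          = (∑ j, a k * (c0 j / a j)) + ∑ j, (a j - 1) := by
            rw [← Finset.mul_sum, hfsum0, mul_comm (a k) m, add_comm]
        _ ≤ (∑ j, a j * (c0 j / a j)) + ∑ j, (a j - 1) := by
            gcongr with j
            exact hk j
        _ = ∑ j, (a j * (c0 j / a j) + (a j - 1)) := (Finset.sum_add_distrib).symm
        _ = ∑ j, c0 j := Finset.sum_congr rfl (fun j _ => (h1 j).symm)
    omega
  rw [vNumber]
  exact le_antisymm (Nat.sInf_le hmem_set) (le_csInf ⟨_, hmem_set⟩ hlow)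

lemma alpha_eq (a : Fin t → ℕ) (ha : ∀ i, 1 ≤ a i) (k : Fin t) (hk : ∀ j, a k ≤ a j) :
    alphaNumber (pideal K a) = a k := by
  have hwit : a k ∈ {d : ℕ | ∃ f ∈ pideal K a, f ≠ 0 ∧ f.totalDegree = d} :=
    ⟨X k ^ a k, Ideal.subset_span (Set.mem_range_self k),
      pow_ne_zero _ (X_ne_zero k), totalDegree_X_pow k (a k)⟩
  apply le_antisymm (Nat.sInf_le hwit)
  apply le_csInf ⟨a k, hwit⟩
  rintro d ⟨g, hg, hg0, rfl⟩
  obtain ⟨c, hc⟩ := MvPolynomial.support_nonempty.mpr hg0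
  have h1 : 1 ≤ ∑ j, c j / a j := by
    have := pideal_le_J a ha hg c hc
    rwa [fsum] at this
  have hj : ∃ j, 1 ≤ c j / a j := by
    by_contra hno
    push_neg at hno
    have hz : ∑ j, c j / a j = 0 := Finset.sum_eq_zero fun j _ => Nat.lt_one_iff.mp (hno j)
    omega
  obtain ⟨j, hj1⟩ := hj
  have haj : a j ≤ c j := (Nat.one_le_div_iff (ha j)).mp hj1
  have hdeg : c.degree ≤ g.totalDegree := by
    have := MvPolynomial.le_totalDegree hc
    rwa [Finsupp.sum, ← Finsupp.degree_apply] at this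
  calc a k ≤ a j := hk j
    _ ≤ c j := haj
    _ ≤ c.degree := Finsupp.le_degree j c
    _ ≤ g.totalDegree := hdeg

lemma bot_case (σ : Type*) (n : ℕ) :
    vNumber ((⊥ : Ideal (MvPolynomial σ K)) ^ (n + 1)) = 0 ∧
    vNumber (⊥ : Ideal (MvPolynomial σ K)) = 0 ∧
    alphaNumber (⊥ : Ideal (MvPolynomial σ K)) = 0 := by
  have hpow : (⊥ : Ideal (MvPolynomial σ K)) ^ (n + 1) = ⊥ := by
    rw [pow_succ, Ideal.mul_bot]
  have hcolon : Submodule.colon (⊥ : Ideal (MvPolynomial σ K)) (Ideal.span {(1 : MvPolynomial σ K)})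
      = ⊥ := by
    ext r
    rw [Ideal.mem_colon_span_singleton, mul_one]
  have hv : vNumber (⊥ : Ideal (MvPolynomial σ K)) = 0 := by
    rw [vNumber, Nat.sInf_eq_zero]
    left
    refine ⟨1, isHomogeneous_one σ K, ?_⟩
    rw [hcolon]
    exact ⟨Ideal.bot_prime, ⟨Ideal.Quotient.mk _ 1, by rw [Submodule.bot_colon', ← colon_eq_annihilator, hcolon, Ideal.bot_prime.radical]⟩⟩
  refine ⟨by rw [hpow]; exact hv, hv, ?_⟩
  have hempty : {d : ℕ | ∃ f ∈ (⊥ : Ideal (MvPolynomial σ K)), f ≠ 0 ∧ f.totalDegree = d} = ∅ := by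
    ext d
    simp only [Set.mem_empty_iff_false, iff_false, Set.mem_setOf_eq, not_exists]
    rintro f ⟨hf, hf0, -⟩
    exact hf0 (Ideal.mem_bot.mp hf)
  rw [alphaNumber, hempty, Nat.sInf_empty]

end VAux

/-- for I = ⟨x_1^{a_1},…,x_t^{a_t}⟩, v(I^{n+1}) = v(I) + n·α(I) for all n ≥ 1. -/
theorem vNumber_pow_pure_powers {K : Type*} [Field K] (t : ℕ) (a : Fin t → ℕ)
    (ha : ∀ i, 1 ≤ a i) :
    ∀ n, 1 ≤ n →
      vNumber ((Ideal.span (Set.range fun j => (X j : MvPolynomial (Fin t) K) ^ a j)) ^ (n + 1)) =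
        vNumber (Ideal.span (Set.range fun j => (X j : MvPolynomial (Fin t) K) ^ a j)) +
          n * alphaNumber (Ideal.span (Set.range fun j => (X j : MvPolynomial (Fin t) K) ^ a j)) := by
  intro n hn
  rcases Nat.eq_zero_or_pos t with ht | ht
  · subst ht
    have hempty : (Set.range fun j : Fin 0 => (X j : MvPolynomial (Fin 0) K) ^ a j) = ∅ :=
      Set.range_eq_empty _
    rw [hempty, Ideal.span_empty]
    obtain ⟨h1, h2, h3⟩ := VAux.bot_case (K := K) (Fin 0) n
    rw [h1, h2, h3]
    omega
  · have : Nonempty (Fin t) := ⟨⟨0, ht⟩⟩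
    obtain ⟨k, hk⟩ := Finite.exists_min a
    have heq : Ideal.span (Set.range fun j => (X j : MvPolynomial (Fin t) K) ^ a j)
        = VAux.pideal K a := rfl
    rw [heq]
    have h1 := VAux.vNumber_pow_succ (K := K) a ha k hk n
    have h0 := VAux.vNumber_pow_succ (K := K) a ha k hk 0
    rw [zero_add, pow_one, zero_mul, add_zero] at h0
    rw [h1, h0, VAux.alpha_eq (K := K) a ha k hk]
end
end
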